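/- Let T be a tree on a finite set I and let π, τ be T-admissible partitions of I. Then their common refinement σ, whose blocks are the nonempty sets B ∩ C with B a block of π and C a block of τ, is again T-admissible, and σ is the meet of π and τ in the poset Ad(T) ordered by refinement. -/
import Mathlib


open Finset

/-- A rooted binary tree with leaves labeled in `α`. -/
inductive BTree (α : Type) : Type where
  | leaf : α → BTree α
  | node : BTree α → BTree α → BTree α

namespace BTree

variable {α : Type} [DecidableEq α]

/-- The list of leaf labels of the tree. -/
def leafList : BTree α → List α
  | .leaf a => [a]
  | .node l r => l.leafList ++ r.leafList

/-- The set of leaf labels of the tree. -/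
def leaves (t : BTree α) : Finset α := t.leafList.toFinset

/-- `t` is a tree on the finite set `I`: its leaves are labeled bijectively by `I`. -/
def IsTreeOn (t : BTree α) (I : Finset α) : Prop :=
  t.leafList.Nodup ∧ t.leaves = I

/-- The set `V(t)` of internal vertices of the tree, each internal vertex being
represented by the set of its ancestor leaves (the leaf labels of the subtree
rooted there).  In this representation a vertex `v` is below a vertex `w` in the
ancestor order (i.e. `w` lies on the path from `v` to the root) exactly when
`v ⊆ w`. -/
def vertexSet : BTree α → Finset (Finset α)
  | .leaf _ => ∅
  | .node l r => insert (l.leaves ∪ r.leaves) (l.vertexSet ∪ r.vertexSet)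

/-- The list of internal vertices of the tree, recorded as the pairs
(left subtree, right subtree) hanging at each internal vertex. -/
def nodes : BTree α → List (BTree α × BTree α)
  | .leaf _ => []
  | .node l r => (l, r) :: (l.nodes ++ r.nodes)

/-- `meetVertex t i j` is the internal vertex `v_{(i,j)}` at which the paths from the
leaves labeled `i` and `j` towards the root first meet (as the set of its ancestor
leaves); meaningful when `i ≠ j` are both leaf labels of `t`. -/
def meetVertex : BTree α → α → α → Finset α
  | .leaf a, _, _ => {a}
  | .node l r, i, j =>
    if i ∈ l.leaves ∧ j ∈ l.leaves then l.meetVertex i j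
    else if i ∈ r.leaves ∧ j ∈ r.leaves then r.meetVertex i j
    else l.leaves ∪ r.leaves

/-- `S(J) = { v_{(i,j)} : i, j ∈ J, i ≠ j }`. -/
def S (t : BTree α) (J : Finset α) : Finset (Finset α) :=
  ((J ×ˢ J).filter fun p => p.1 ≠ p.2).image fun p => t.meetVertex p.1 p.2

/-- A partition `π` of `I` is `T`-admissible when `S(B) ∩ S(B') = ∅` for every pair of
distinct blocks `B, B'` of `π`. -/
def Admissible (t : BTree α) {I : Finset α} (π : Finpartition I) : Prop :=
  ∀ B ∈ π.parts, ∀ C ∈ π.parts, B ≠ C → t.S B ∩ t.S C = ∅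

/-- A nice total order on the internal vertices of `T`, encoded by an integer-valued
ranking function: it is injective on `V(T)` and is a linear extension of the ancestor
order (a vertex `v` is below `w`, i.e. `w` is on the path from `v` to the root, iff
`v ⊆ w` in the ancestor-leaves representation). -/
def IsNiceOrder (t : BTree α) (ord : Finset α → ℕ) : Prop :=
  Set.InjOn ord ↑t.vertexSet ∧
    ∀ v ∈ t.vertexSet, ∀ w ∈ t.vertexSet, v ⊆ w → ord v ≤ ord w

/-- A nice total order identifying `V(T)` with `{1, …, n}`. -/
def IsNiceLabeling (t : BTree α) (n : ℕ) (ord : Finset α → ℕ) : Prop :=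
  t.IsNiceOrder ord ∧ t.vertexSet.image ord = Finset.Icc 1 n

end BTree

/-- The poset `Ad(T)` of `T`-admissible partitions of `I`, ordered by refinement
(the order is inherited from the refinement order on `Finpartition I`). -/
def AdPartition {α : Type} [DecidableEq α] (T : BTree α) (I : Finset α) : Type :=
  {π : Finpartition I // T.Admissible π}

namespace AdPartition

variable {α : Type} [DecidableEq α] {T : BTree α} {I : Finset α}

instance : PartialOrder (AdPartition T I) := Subtype.partialOrder _

/-- The set `V(π)` of internal vertices of a partition: the union of the `S(B)` over
the blocks `B` of `π`. -/
def verts (T : BTree α) {I : Finset α} (π : Finpartition I) : Finset (Finset α) :=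
  π.parts.sup fun B => T.S B

/-- The edge label `λ(π, τ)` of a covering relation `π ⋖ τ` in `Ad(T)`: the unique
internal vertex `v` with `V(τ) = V(π) ∪ {v}` (extracted here as the union of the
finset `V(τ) \ V(π)`, which is the singleton `{v}` when `π ⋖ τ`). -/
def label (T : BTree α) {I : Finset α} (π τ : AdPartition T I) : Finset α :=
  (verts T τ.1 \ verts T π.1).sup id

/-- The label sequence, with respect to a nice order `ord`, of a saturated chain
recorded as a list of consecutive elements. -/
def labelSeq (T : BTree α) {I : Finset α} (ord : Finset α → ℕ)
    (c : List (AdPartition T I)) : List ℕ :=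
  (c.zip c.tail).map fun p => ord (label T p.1 p.2)

/-- The atom of `Ad(T)` whose unique doubleton block is `{p, q}`, all other blocks
being singletons. -/
def IsAtomPart (T : BTree α) (I : Finset α) (a : AdPartition T I) (p q : α) : Prop :=
  p ≠ q ∧ a.1.parts = insert {p, q} ((I \ {p, q}).image fun x => ({x} : Finset α))

end AdPartition

section LatticeGen

variable {P : Type*} [PartialOrder P]

/-- A subset of a partial order closed under existing pairwise joins and meets. -/
def IsLatClosed (D : Set P) : Prop :=
  (∀ x ∈ D, ∀ y ∈ D, ∀ z, IsLUB {x, y} z → z ∈ D) ∧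
    (∀ x ∈ D, ∀ y ∈ D, ∀ z, IsGLB {x, y} z → z ∈ D)

/-- The sublattice generated by a subset of a partial order: the smallest subset
containing it that is closed under pairwise joins and meets. -/
def latticeGen (s : Set P) : Set P :=
  ⋂₀ {D : Set P | s ⊆ D ∧ IsLatClosed D}

/-- The subset `D`, with the induced join and meet, is a distributive lattice:
`x ∧ (y ∨ z) = (x ∧ y) ∨ (x ∧ z)` for all `x, y, z ∈ D`. -/
def IsDistribSet (D : Set P) : Prop :=
  ∀ x ∈ D, ∀ y ∈ D, ∀ z ∈ D,
    ∀ yz, IsLUB {y, z} yz → ∀ w, IsGLB {x, yz} w →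
      ∀ xy, IsGLB {x, y} xy → ∀ xz, IsGLB {x, z} xz →
        ∀ u, IsLUB {xy, xz} u → w = u

end LatticeGen

/-- the common refinement `σ` of two `T`-admissible partitions `π, τ`
(whose blocks are the nonempty intersections `B ∩ C` of a block `B` of `π` with a
block `C` of `τ`) is again `T`-admissible, and it is the meet of `π` and `τ` in the
refinement order on `Ad(T)`. -/
theorem stmt1 {α : Type} [DecidableEq α] (I : Finset α) (T : BTree α)
    (hT : T.IsTreeOn I) (π τ : AdPartition T I) (σ : Finpartition I)
    (hσ : σ.parts = ((π.1.parts ×ˢ τ.1.parts).image fun BC => BC.1 ∩ BC.2).filter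
      fun B => B.Nonempty) :
    ∃ h : T.Admissible σ,
      IsGLB ({π, τ} : Set (AdPartition T I)) (⟨σ, h⟩ : AdPartition T I) := by
  have Smono : ∀ {D B : Finset α}, D ⊆ B → T.S D ⊆ T.S B := by
    intro D B h
    unfold BTree.S
    exact Finset.image_subset_image
      (Finset.filter_subset_filter _ (Finset.product_subset_product h h))
  have hadm : T.Admissible σ := by
    intro D hD D' hD' hne
    rw [hσ, Finset.mem_filter, Finset.mem_image] at hD hD'
    obtain ⟨⟨⟨B, C⟩, hBC, rfl⟩, -⟩ := hD
    obtain ⟨⟨⟨B', C'⟩, hBC', rfl⟩, -⟩ := hD'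
    rw [Finset.mem_product] at hBC hBC'
    by_cases hBB : B = B'
    · have hCC : C ≠ C' := by rintro rfl; exact hne (by rw [hBB])
      have := τ.2 C hBC.2 C' hBC'.2 hCC
      refine Finset.eq_empty_of_forall_notMem fun v hv => ?_
      rw [Finset.mem_inter] at hv
      have : v ∈ T.S C ∩ T.S C' := Finset.mem_inter.2
        ⟨Smono Finset.inter_subset_right hv.1, Smono Finset.inter_subset_right hv.2⟩
      simp [τ.2 C hBC.2 C' hBC'.2 hCC] at this
    · refine Finset.eq_empty_of_forall_notMem fun v hv => ?_
      rw [Finset.mem_inter] at hv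
      have : v ∈ T.S B ∩ T.S B' := Finset.mem_inter.2
        ⟨Smono Finset.inter_subset_left hv.1, Smono Finset.inter_subset_left hv.2⟩
      simp [π.2 B hBC.1 B' hBC'.1 hBB] at this
  refine ⟨hadm, ?_, ?_⟩
  · rintro x (rfl | rfl)
    · show σ ≤ x.1
      intro b hb
      rw [hσ, Finset.mem_filter, Finset.mem_image] at hb
      obtain ⟨⟨⟨B, C⟩, hBC, rfl⟩, -⟩ := hb
      rw [Finset.mem_product] at hBC
      exact ⟨B, hBC.1, Finset.inter_subset_left⟩
    · show σ ≤ x.1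
      intro b hb
      rw [hσ, Finset.mem_filter, Finset.mem_image] at hb
      obtain ⟨⟨⟨B, C⟩, hBC, rfl⟩, -⟩ := hb
      rw [Finset.mem_product] at hBC
      exact ⟨C, hBC.2, Finset.inter_subset_right⟩
  · intro ρ hρ
    have hπ : ρ ≤ π := hρ (by simp)
    have hτ : ρ ≤ τ := hρ (by simp)
    show ρ.1 ≤ σ
    intro D hD
    obtain ⟨B, hB, hDB⟩ := hπ hD
    obtain ⟨C, hC, hDC⟩ := hτ hD
    refine ⟨B ∩ C, ?_, Finset.subset_inter hDB hDC⟩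
    rw [hσ, Finset.mem_filter, Finset.mem_image]
    exact ⟨⟨⟨B, C⟩, Finset.mem_product.2 ⟨hB, hC⟩, rfl⟩,
      (ρ.1.nonempty_of_mem_parts hD).mono (Finset.subset_inter hDB hDC)⟩
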